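/- Let 𝔤 be the 4-dimensional real Lie algebra e(2) ⊕ ℝ with basis e₁, e₂, e₃, e₄ and nonzero brackets [e₁,e₃] = e₂, [e₂,e₃] = −e₁. The subspace B²(𝔤) of 2-coboundaries of 𝔤 has dimension 2, and the quotient vector space H²(𝔤) = Z²(𝔤)/B²(𝔤) (the 2-cohomology group of 𝔤) has dimension 2. -/

import Mathlib

noncomputable section

/-- The Lie bracket of the Lie algebra `e(2) ⊕ ℝ` on `ℝ⁴`, in the basis
`e₁ = e 0, e₂ = e 1, e₃ = e 2, e₄ = e 3` with nonzero brackets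
`[e₁,e₃] = e₂`, `[e₂,e₃] = -e₁`. -/
def bra (x y : Fin 4 → ℝ) : Fin 4 → ℝ :=
  ![-(x 1 * y 2 - x 2 * y 1), x 0 * y 2 - x 2 * y 0, 0, 0]

/-- `F` is an ℝ-bilinear form on `ℝ⁴`. -/
def IsBilin (F : (Fin 4 → ℝ) → (Fin 4 → ℝ) → ℝ) : Prop :=
  (∀ (c : ℝ) (x x' y : Fin 4 → ℝ), F (c • x + x') y = c * F x y + F x' y) ∧
  (∀ (c : ℝ) (x y y' : Fin 4 → ℝ), F x (c • y + y') = c * F x y + F x y')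

/-- The 2-cocycle identity for a bilinear form on `e(2) ⊕ ℝ`. -/
def IsCocycle (F : (Fin 4 → ℝ) → (Fin 4 → ℝ) → ℝ) : Prop :=
  ∀ x y z : Fin 4 → ℝ, F (bra x y) z + F (bra y z) x + F (bra z x) y = 0

/-- `Z²(𝔤)`: the subspace of alternating bilinear forms on `e(2) ⊕ ℝ` satisfying the
2-cocycle identity. -/
def Z2 : Submodule ℝ ((Fin 4 → ℝ) → (Fin 4 → ℝ) → ℝ) where
  carrier := {F | IsBilin F ∧ (∀ x : Fin 4 → ℝ, F x x = 0) ∧ IsCocycle F}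
  zero_mem' := by
    refine ⟨⟨fun c x x' y => by simp, fun c x y y' => by simp⟩, fun x => rfl,
      fun x y z => by simp⟩
  add_mem' := by
    rintro F G ⟨⟨hFl, hFr⟩, hFalt, hFc⟩ ⟨⟨hGl, hGr⟩, hGalt, hGc⟩
    refine ⟨⟨fun c x x' y => ?_, fun c x y y' => ?_⟩, fun x => ?_, fun x y z => ?_⟩
    · simp only [Pi.add_apply, hFl c x x' y, hGl c x x' y]; ring
    · simp only [Pi.add_apply, hFr c x y y', hGr c x y y']; ring
    · simp only [Pi.add_apply, hFalt x, hGalt x]; ring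
    · have h1 := hFc x y z; have h2 := hGc x y z
      simp only [Pi.add_apply]; linarith
  smul_mem' := by
    rintro c F ⟨⟨hFl, hFr⟩, hFalt, hFc⟩
    refine ⟨⟨fun d x x' y => ?_, fun d x y y' => ?_⟩, fun x => ?_, fun x y z => ?_⟩
    · simp only [Pi.smul_apply, smul_eq_mul, hFl d x x' y]; ring
    · simp only [Pi.smul_apply, smul_eq_mul, hFr d x y y']; ring
    · simp only [Pi.smul_apply, smul_eq_mul, hFalt x]; ring
    · have h1 := hFc x y z
      simp only [Pi.smul_apply, smul_eq_mul]; linear_combination c * h1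

/-- `B²(𝔤)`: the subspace of 2-coboundaries `F(x,y) = λ([x,y])`, `λ ∈ 𝔤*`. -/
def B2 : Submodule ℝ ((Fin 4 → ℝ) → (Fin 4 → ℝ) → ℝ) where
  carrier := {F | ∃ lam : (Fin 4 → ℝ) →ₗ[ℝ] ℝ, ∀ x y : Fin 4 → ℝ, F x y = lam (bra x y)}
  zero_mem' := ⟨0, by simp⟩
  add_mem' := by
    rintro F G ⟨l1, h1⟩ ⟨l2, h2⟩
    exact ⟨l1 + l2, fun x y => by simp [h1 x y, h2 x y]⟩
  smul_mem' := by
    rintro c F ⟨l, h⟩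
    exact ⟨c • l, fun x y => by simp [h x y]⟩
/-! ### Auxiliary material -/

/-- Standard basis vectors of `ℝ⁴`. -/
def E : Fin 4 → (Fin 4 → ℝ) := ![![1,0,0,0], ![0,1,0,0], ![0,0,1,0], ![0,0,0,1]]

lemma bil_zero_left {F : (Fin 4 → ℝ) → (Fin 4 → ℝ) → ℝ} (hF : IsBilin F) (y : Fin 4 → ℝ) :
    F 0 y = 0 := by
  have h := hF.1 1 0 0 y
  simp only [one_smul, add_zero, one_mul] at h
  linarith

lemma bil_zero_right {F : (Fin 4 → ℝ) → (Fin 4 → ℝ) → ℝ} (hF : IsBilin F) (x : Fin 4 → ℝ) :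
    F x 0 = 0 := by
  have h := hF.2 1 x 0 0
  simp only [one_smul, add_zero, one_mul] at h
  linarith

lemma bil_smul_left {F : (Fin 4 → ℝ) → (Fin 4 → ℝ) → ℝ} (hF : IsBilin F) (c : ℝ)
    (u v : Fin 4 → ℝ) : F (c • u) v = c * F u v := by
  have h := hF.1 c u 0 v
  rw [add_zero] at h
  rw [h, bil_zero_left hF, add_zero]

lemma bil_add_left {F : (Fin 4 → ℝ) → (Fin 4 → ℝ) → ℝ} (hF : IsBilin F)
    (u u' v : Fin 4 → ℝ) : F (u + u') v = F u v + F u' v := by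
  have h := hF.1 1 u u' v
  rwa [one_smul, one_mul] at h

lemma bil_add_right {F : (Fin 4 → ℝ) → (Fin 4 → ℝ) → ℝ} (hF : IsBilin F)
    (u v v' : Fin 4 → ℝ) : F u (v + v') = F u v + F u v' := by
  have h := hF.2 1 u v v'
  rwa [one_smul, one_mul] at h

lemma alt_antisymm {F : (Fin 4 → ℝ) → (Fin 4 → ℝ) → ℝ} (hF : IsBilin F)
    (halt : ∀ x, F x x = 0) (u v : Fin 4 → ℝ) : F u v = - F v u := by
  have h := halt (u + v)
  rw [bil_add_left hF, bil_add_right hF, bil_add_right hF, halt u, halt v] at h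
  linarith

lemma decomp (x : Fin 4 → ℝ) :
    x = x 0 • E 0 + (x 1 • E 1 + (x 2 • E 2 + (x 3 • E 3 + 0))) := by
  funext j
  fin_cases j <;> simp [E]

lemma expand_left {F : (Fin 4 → ℝ) → (Fin 4 → ℝ) → ℝ} (hF : IsBilin F) (x y : Fin 4 → ℝ) :
    F x y = x 0 * F (E 0) y + x 1 * F (E 1) y + x 2 * F (E 2) y + x 3 * F (E 3) y := by
  conv_lhs => rw [decomp x]
  rw [hF.1, hF.1, hF.1, hF.1, bil_zero_left hF]
  ring

lemma expand_right {F : (Fin 4 → ℝ) → (Fin 4 → ℝ) → ℝ} (hF : IsBilin F) (x y : Fin 4 → ℝ) :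
    F x y = y 0 * F x (E 0) + y 1 * F x (E 1) + y 2 * F x (E 2) + y 3 * F x (E 3) := by
  conv_lhs => rw [decomp y]
  rw [hF.2, hF.2, hF.2, hF.2, bil_zero_right hF]
  ring

lemma expand {F : (Fin 4 → ℝ) → (Fin 4 → ℝ) → ℝ} (hF : IsBilin F) (x y : Fin 4 → ℝ) :
    F x y =
      x 0 * y 0 * F (E 0) (E 0) + x 0 * y 1 * F (E 0) (E 1) + x 0 * y 2 * F (E 0) (E 2) +
      x 0 * y 3 * F (E 0) (E 3) +
      x 1 * y 0 * F (E 1) (E 0) + x 1 * y 1 * F (E 1) (E 1) + x 1 * y 2 * F (E 1) (E 2) +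
      x 1 * y 3 * F (E 1) (E 3) +
      x 2 * y 0 * F (E 2) (E 0) + x 2 * y 1 * F (E 2) (E 1) + x 2 * y 2 * F (E 2) (E 2) +
      x 2 * y 3 * F (E 2) (E 3) +
      x 3 * y 0 * F (E 3) (E 0) + x 3 * y 1 * F (E 3) (E 1) + x 3 * y 2 * F (E 3) (E 2) +
      x 3 * y 3 * F (E 3) (E 3) := by
  rw [expand_left hF x y, expand_right hF (E 0) y, expand_right hF (E 1) y,
    expand_right hF (E 2) y, expand_right hF (E 3) y]
  ring

lemma bra_E01 : bra (E 0) (E 1) = 0 := by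
  funext j; fin_cases j <;> norm_num [bra, E, Matrix.vecHead, Matrix.vecTail, Matrix.cons_val_two, Matrix.cons_val_three]

lemma bra_E02 : bra (E 0) (E 2) = E 1 := by
  funext j; fin_cases j <;> norm_num [bra, E, Matrix.vecHead, Matrix.vecTail, Matrix.cons_val_two, Matrix.cons_val_three]

lemma bra_E12 : bra (E 1) (E 2) = (-1 : ℝ) • E 0 := by
  funext j; fin_cases j <;> norm_num [bra, E, Matrix.vecHead, Matrix.vecTail, Matrix.cons_val_two, Matrix.cons_val_three]

lemma bra_E23 : bra (E 2) (E 3) = 0 := by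
  funext j; fin_cases j <;> norm_num [bra, E, Matrix.vecHead, Matrix.vecTail, Matrix.cons_val_two, Matrix.cons_val_three]

lemma bra_E30 : bra (E 3) (E 0) = 0 := by
  funext j; fin_cases j <;> norm_num [bra, E, Matrix.vecHead, Matrix.vecTail, Matrix.cons_val_two, Matrix.cons_val_three]

lemma bra_E31 : bra (E 3) (E 1) = 0 := by
  funext j; fin_cases j <;> norm_num [bra, E, Matrix.vecHead, Matrix.vecTail, Matrix.cons_val_two, Matrix.cons_val_three]

lemma bra_decomp (x y : Fin 4 → ℝ) :
    bra x y = (-(x 1 * y 2 - x 2 * y 1)) • E 0 + (x 0 * y 2 - x 2 * y 0) • E 1 := by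
  funext j; fin_cases j <;> norm_num [bra, E, Matrix.vecHead, Matrix.vecTail, Matrix.cons_val_two, Matrix.cons_val_three]

/-- In a cocycle in `Z2` with `F e₁ e₂ = 0` and `F e₃ e₄ = 0`, all basis values vanish
except `F e₁ e₃` and `F e₂ e₃` (and their negatives). -/
lemma cocycle_vals {F : (Fin 4 → ℝ) → (Fin 4 → ℝ) → ℝ} (hF : IsBilin F)
    (hc : IsCocycle F) : F (E 1) (E 3) = 0 ∧ F (E 0) (E 3) = 0 := by
  constructor
  · have h := hc (E 0) (E 2) (E 3)
    rw [bra_E02, bra_E23, bra_E30, bil_zero_left hF, bil_zero_left hF] at h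
    linarith
  · have h := hc (E 1) (E 2) (E 3)
    rw [bra_E12, bra_E23, bra_E31, bil_zero_left hF, bil_zero_left hF,
      bil_smul_left hF] at h
    linarith

/-- The evaluation map `B² → ℝ²`, `F ↦ (F e₁ e₃, F e₂ e₃)`. -/
def phiB : B2 →ₗ[ℝ] (Fin 2 → ℝ) where
  toFun F := ![F.1 (E 0) (E 2), F.1 (E 1) (E 2)]
  map_add' F G := by
    funext j; fin_cases j <;> simp
  map_smul' c F := by
    funext j; fin_cases j <;> simp

/-- The evaluation map `Z² → ℝ²`, `F ↦ (F e₁ e₂, F e₃ e₄)`. -/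
def psiZ : Z2 →ₗ[ℝ] (Fin 2 → ℝ) where
  toFun F := ![F.1 (E 0) (E 1), F.1 (E 2) (E 3)]
  map_add' F G := by
    funext j; fin_cases j <;> simp
  map_smul' c F := by
    funext j; fin_cases j <;> simp


/-- for `𝔤 = e(2) ⊕ ℝ` the space of 2-coboundaries `B²(𝔤)` is
2-dimensional, and the 2-cohomology group `H²(𝔤) = Z²(𝔤)/B²(𝔤)` is 2-dimensional. -/
theorem finrank_B2_and_H2 :
    Module.finrank ℝ B2 = 2 ∧
    Module.finrank ℝ (↥Z2 ⧸ Submodule.comap Z2.subtype B2) = 2 := by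
  have key : ∀ (lam : (Fin 4 → ℝ) →ₗ[ℝ] ℝ) (x y : Fin 4 → ℝ),
      lam (bra x y) = -(x 1 * y 2 - x 2 * y 1) * lam (E 0) +
        (x 0 * y 2 - x 2 * y 0) * lam (E 1) := by
    intro lam x y
    rw [bra_decomp, map_add, map_smul, map_smul, smul_eq_mul, smul_eq_mul]
  have hEvals : ∀ (lam : (Fin 4 → ℝ) →ₗ[ℝ] ℝ),
      lam (bra (E 0) (E 2)) = lam (E 1) ∧ lam (bra (E 1) (E 2)) = -lam (E 0) := by
    intro lam
    constructor
    · rw [bra_E02]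
    · rw [bra_E12, map_smul, smul_eq_mul]; ring
  have hinjB : Function.Injective phiB := by
    intro F G h
    have h0 : F.1 (E 0) (E 2) = G.1 (E 0) (E 2) := by
      have := congrFun h 0; simpa [phiB] using this
    have h1 : F.1 (E 1) (E 2) = G.1 (E 1) (E 2) := by
      have := congrFun h 1; simpa [phiB] using this
    obtain ⟨lamF, hlF⟩ := F.2
    obtain ⟨lamG, hlG⟩ := G.2
    have e1 : lamF (E 1) = lamG (E 1) := by
      have := h0
      rw [hlF, hlG, (hEvals lamF).1, (hEvals lamG).1] at this
      exact this
    have e0 : lamF (E 0) = lamG (E 0) := by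
      have := h1
      rw [hlF, hlG, (hEvals lamF).2, (hEvals lamG).2] at this
      linarith
    apply Subtype.ext
    funext x y
    rw [hlF, hlG, key, key, e0, e1]
  have hsurjB : Function.Surjective phiB := by
    intro v
    set lam : (Fin 4 → ℝ) →ₗ[ℝ] ℝ :=
      (-(v 1)) • LinearMap.proj 0 + (v 0) • LinearMap.proj 1 with hlamdef
    have hl0 : lam (E 0) = -(v 1) := by
      simp [hlamdef, E, LinearMap.proj_apply]
    have hl1 : lam (E 1) = v 0 := by
      simp [hlamdef, E, LinearMap.proj_apply]
    have hmem : (fun x y => lam (bra x y)) ∈ B2 := ⟨lam, fun _ _ => rfl⟩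
    refine ⟨⟨_, hmem⟩, ?_⟩
    funext j
    fin_cases j
    · show lam (bra (E 0) (E 2)) = v 0
      rw [(hEvals lam).1, hl1]
    · show lam (bra (E 1) (E 2)) = v 1
      rw [(hEvals lam).2, hl0]; ring
  have hfin2 : Module.finrank ℝ (Fin 2 → ℝ) = 2 := by simp
  have hB : Module.finrank ℝ B2 = 2 := by
    rw [(LinearEquiv.ofBijective phiB ⟨hinjB, hsurjB⟩).finrank_eq, hfin2]
  refine ⟨hB, ?_⟩
  have hsurjZ : Function.Surjective psiZ := by
    intro v
    set F : (Fin 4 → ℝ) → (Fin 4 → ℝ) → ℝ := fun x y =>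
      v 0 * (x 0 * y 1 - x 1 * y 0) + v 1 * (x 2 * y 3 - x 3 * y 2) with hFdef
    have hmem : F ∈ Z2 := by
      refine ⟨⟨fun c x x' y => ?_, fun c x y y' => ?_⟩, fun x => by simp [hFdef]; ring,
        fun x y z => ?_⟩
      · simp only [hFdef, Pi.add_apply, Pi.smul_apply, smul_eq_mul]; ring
      · simp only [hFdef, Pi.add_apply, Pi.smul_apply, smul_eq_mul]; ring
      · simp only [hFdef, bra, Matrix.cons_val_zero, Matrix.cons_val_one, Matrix.head_cons,
          Matrix.cons_val_two, Matrix.tail_cons, Matrix.cons_val_three]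
        ring
    refine ⟨⟨F, hmem⟩, ?_⟩
    funext j
    fin_cases j
    · show F (E 0) (E 1) = v 0
      norm_num [hFdef, E, Matrix.cons_val_two, Matrix.cons_val_three]
    · show F (E 2) (E 3) = v 1
      norm_num [hFdef, E, Matrix.cons_val_two, Matrix.cons_val_three]
  have hker : LinearMap.ker psiZ = Submodule.comap Z2.subtype B2 := by
    ext F
    simp only [LinearMap.mem_ker, Submodule.mem_comap, Submodule.subtype_apply]
    constructor
    · intro h
      have h01 : F.1 (E 0) (E 1) = 0 := by
        have := congrFun h 0; simpa [psiZ] using this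
      have h23 : F.1 (E 2) (E 3) = 0 := by
        have := congrFun h 1; simpa [psiZ] using this
      obtain ⟨hbil, halt, hcoc⟩ := F.2
      obtain ⟨h13z, h03z⟩ := cocycle_vals hbil hcoc
      refine ⟨(-(F.1 (E 1) (E 2))) • LinearMap.proj 0 + (F.1 (E 0) (E 2)) • LinearMap.proj 1,
        fun x y => ?_⟩
      have hexp := expand hbil x y
      rw [alt_antisymm hbil halt (E 1) (E 0), alt_antisymm hbil halt (E 2) (E 0),
        alt_antisymm hbil halt (E 2) (E 1), alt_antisymm hbil halt (E 3) (E 0),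
        alt_antisymm hbil halt (E 3) (E 1), alt_antisymm hbil halt (E 3) (E 2),
        h01, h23, h13z, h03z, halt (E 0), halt (E 1), halt (E 2), halt (E 3)] at hexp
      rw [hexp]
      simp only [LinearMap.add_apply, LinearMap.smul_apply, LinearMap.proj_apply, smul_eq_mul,
        bra, Matrix.cons_val_zero, Matrix.cons_val_one, Matrix.head_cons]
      ring
    · rintro ⟨lam, hlam⟩
      have h1 : F.1 (E 0) (E 1) = 0 := by rw [hlam, bra_E01, map_zero]
      have h2 : F.1 (E 2) (E 3) = 0 := by rw [hlam, bra_E23, map_zero]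
      funext j
      fin_cases j <;> simp [psiZ, h1, h2]
  rw [← hker, (LinearMap.quotKerEquivOfSurjective psiZ hsurjZ).finrank_eq, hfin2]
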